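/- Let G be a finite subgroup of SL(2, ℂ), let V be the natural two-dimensional representation of G, and let S and T be simple finite-dimensional complex representations of G. Then dim_ℂ Hom_G(T, V ⊗ S) = dim_ℂ Hom_G(S, V ⊗ T). (Equivalently: in the McKay quiver of G ⊂ SL(2,ℂ), there is an arrow from S to T if and only if there is an arrow from T to S, with the same multiplicity.) -/

import Mathlib

open CategoryTheory CategoryTheory.MonoidalCategory Module

/-- The natural two-dimensional complex representation of a subgroup `G` of `SL(2, ℂ)`,
acting on `ℂ² = Fin 2 → ℂ` by matrix multiplication. -/
noncomputable def SL2.natRep (G : Subgroup (Matrix.SpecialLinearGroup (Fin 2) ℂ)) :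
    Representation ℂ G (Fin 2 → ℂ) :=
  LinearEquiv.automorphismGroup.toLinearMapMonoidHom.comp
    (Matrix.SpecialLinearGroup.toLin'.comp G.subtype)

/-- The natural representation of `G ⊆ SL(2, ℂ)` as an object of `FDRep ℂ G`. -/
noncomputable def SL2.natV (G : Subgroup (Matrix.SpecialLinearGroup (Fin 2) ℂ)) :
    FDRep ℂ G :=
  FDRep.of (SL2.natRep G)

open Representation FDRep in
/-- Dimension of a Hom space of `FDRep`s as an averaged character sum. -/
theorem finrank_hom_eq_average_char {k : Type} [Field k] {G : Type} [Group G]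
    [Fintype G] [Invertible (Fintype.card G : k)] (X Y : FDRep k G) :
    (finrank k (X ⟶ Y) : k) =
      ⅟ (Fintype.card G : k) • ∑ g : G, X.character g⁻¹ * Y.character g := by
  conv_rhs =>
    enter [2, 2, g]
    rw [← FDRep.char_linHom]
  have : Invertible (Nat.card G : k) := by rwa [Nat.card_eq_fintype_card]
  rw [smul_eq_mul, invOf_eq_inv, ← Nat.card_eq_fintype_card]
  rw [average_char_eq_finrank_invariants]
  rw [show (of (linHom X.ρ Y.ρ)).ρ = linHom X.ρ Y.ρ from FDRep.of_ρ' (linHom X.ρ Y.ρ)]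
  erw [(linHom.invariantsEquivFDRepHom X Y).finrank_eq]

/-- The character of the natural representation is the matrix trace. -/
theorem SL2.natV_character (G : Subgroup (Matrix.SpecialLinearGroup (Fin 2) ℂ)) (g : G) :
    (SL2.natV G).character g = Matrix.trace (g : Matrix (Fin 2) (Fin 2) ℂ) := by
  have h1 : (SL2.natV G).character g = LinearMap.trace ℂ (Fin 2 → ℂ)
      (Matrix.toLin' ((g : Matrix.SpecialLinearGroup (Fin 2) ℂ) : Matrix (Fin 2) (Fin 2) ℂ)) :=
    rfl
  rw [h1, LinearMap.trace_eq_matrix_trace ℂ (Pi.basisFun ℂ (Fin 2)),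
    LinearMap.toMatrix_eq_toMatrix', LinearMap.toMatrix'_toLin']

/-- The natural character is symmetric under inversion. -/
theorem SL2.natV_character_inv (G : Subgroup (Matrix.SpecialLinearGroup (Fin 2) ℂ)) (g : G) :
    (SL2.natV G).character g⁻¹ = (SL2.natV G).character g := by
  rw [SL2.natV_character, SL2.natV_character]
  show Matrix.trace (((g : Matrix.SpecialLinearGroup (Fin 2) ℂ)⁻¹ :
      Matrix.SpecialLinearGroup (Fin 2) ℂ) : Matrix (Fin 2) (Fin 2) ℂ) = _
  rw [Matrix.SpecialLinearGroup.coe_inv, Matrix.adjugate_fin_two]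
  simp [Matrix.trace_fin_two, add_comm]

/-- For a finite subgroup `G` of `SL(2, ℂ)`, the natural representation `V`, and simple
finite-dimensional complex representations `S`, `T` of `G`,
`dim Hom_G(T, V ⊗ S) = dim Hom_G(S, V ⊗ T)`: in the McKay quiver of `G ⊂ SL(2, ℂ)` there
is an arrow from `S` to `T` iff there is one from `T` to `S`, with the same multiplicity. -/
theorem mckay_sl2_symmetric
    (G : Subgroup (Matrix.SpecialLinearGroup (Fin 2) ℂ)) [Finite G]
    (S T : FDRep ℂ G) [Simple S] [Simple T] :
    finrank ℂ (T ⟶ SL2.natV G ⊗ S) = finrank ℂ (S ⟶ SL2.natV G ⊗ T) := by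
  have : Fintype G := Fintype.ofFinite G
  have : Invertible (Fintype.card G : ℂ) :=
    invertibleOfNonzero (Nat.cast_ne_zero.mpr Fintype.card_ne_zero)
  have key : (finrank ℂ (T ⟶ SL2.natV G ⊗ S) : ℂ) = (finrank ℂ (S ⟶ SL2.natV G ⊗ T) : ℂ) := by
    rw [finrank_hom_eq_average_char T (SL2.natV G ⊗ S),
      finrank_hom_eq_average_char S (SL2.natV G ⊗ T)]
    congr 1
    refine Fintype.sum_equiv (Equiv.inv G) _ _ fun g => ?_
    simp only [Equiv.inv_apply, inv_inv, FDRep.char_tensor, Pi.mul_apply]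
    rw [SL2.natV_character_inv]
    ring
  exact_mod_cast key
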